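/- Let (A,m) be an excellent normal local domain of dimension d ≥ 1, and let I be an ideal of A. If G_I(A) is unmixed and equidimensional, then at least one of the following holds: (1) (I^n)^sat = I^n for all n ≥ 1; (2) ℓ(I) = d. -/

import Mathlib

open IsLocalRing Filter Polynomial

noncomputable section
set_option synthInstance.maxHeartbeats 1000000
set_option maxHeartbeats 2000000
set_option linter.unusedVariables false

/-- The associated graded ring `G_I(A) = ⊕ₙ Iⁿ/Iⁿ⁺¹` of `A` with respect to `I`,
realized as the quotient `R(I)/I·R(I)` of the Rees algebra. -/
abbrev assocGraded {A : Type} [CommRing A] (I : Ideal A) :=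
  (reesAlgebra I) ⧸ (Ideal.map (algebraMap A (reesAlgebra I)) I)

/-- The fiber cone `R(I)/m·R(I) = ⊕ₙ Iⁿ/m·Iⁿ`. -/
abbrev fiberCone (A : Type) [CommRing A] [IsLocalRing A] (I : Ideal A) :=
  (reesAlgebra I) ⧸ (Ideal.map (algebraMap A (reesAlgebra I)) (maximalIdeal A))

/-- The analytic spread `ℓ(I)`: the Krull dimension of the fiber cone. -/
noncomputable def analyticSpread (A : Type) [CommRing A] [IsLocalRing A] (I : Ideal A) :
    WithBot ℕ∞ :=
  ringKrullDim (fiberCone A I)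

/-- A ring `G` is unmixed and equidimensional (of dimension `d`) if `dim G/P = d`
for every associated prime `P` of `G` (as a module over itself). -/
def UnmixedEquidim (G : Type*) [CommRing G] (d : ℕ) : Prop :=
  ∀ P ∈ associatedPrimes G G, ringKrullDim (G ⧸ P) = (d : WithBot ℕ∞)

/-- The saturation `J^sat = J : m^∞ = ⋃ᵢ (J : mⁱ)`. -/
noncomputable def Ideal.sat {A : Type} [CommRing A] [IsLocalRing A] (J : Ideal A) : Ideal A :=
  ⨆ i : ℕ, Submodule.colon (J : Submodule A A) (((maximalIdeal A) ^ i : Ideal A) : Submodule A A)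

/-- A regular local ring: a Noetherian local ring whose maximal ideal (the set of
nonunits) can be generated by `dim`-many elements. -/
def IsRegularLocalRingD (B : Type) [CommRing B] : Prop :=
  IsNoetherianRing B ∧ IsLocalRing B ∧
    ∃ (n : ℕ) (s : Finset B), ringKrullDim B = (n : WithBot ℕ∞) ∧ s.card = n ∧
      ∀ x : B, x ∈ Ideal.span (s : Set B) ↔ ¬ IsUnit x

/-- A ring is catenary if any two saturated chains of primes with the same endpoints
have the same length. -/
def IsCatenaryRing (B : Type) [CommRing B] : Prop :=
  ∀ c₁ c₂ : RelSeries (α := PrimeSpectrum B) {p : PrimeSpectrum B × PrimeSpectrum B | p.1 ⋖ p.2},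
    c₁.head = c₂.head → c₁.last = c₂.last → c₁.length = c₂.length

/-- `A` is universally catenary: every finitely generated `A`-algebra is catenary. -/
def UnivCatenary (A : Type) [CommRing A] : Prop :=
  ∀ (B : Type) [CommRing B] [Algebra A B], Algebra.FiniteType A B → IsCatenaryRing B

/-- A ring all of whose localizations at primes are regular local rings. -/
def IsRegularRingD (B : Type) [CommRing B] : Prop :=
  IsNoetherianRing B ∧
    ∀ (P : Ideal B) (hP : P.IsPrime), IsRegularLocalRingD (Localization.AtPrime P)

/-- A `k`-algebra `R` is geometrically regular: `k' ⊗[k] R` is a regular ring for every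
finite field extension `k'` of `k`. -/
def GeomRegularOver (k R : Type) [Field k] [CommRing R] [Algebra k R] : Prop :=
  ∀ (k' : Type) [Field k'] [Algebra k k'], FiniteDimensional k k' →
    IsRegularRingD (TensorProduct k k' R)

/-- `A` is a G-ring: for every prime `P`, the formal fibers of `A_P` are geometrically
regular, i.e. for every prime `Q` of `A_P`, the fiber `κ(Q) ⊗ (A_P)^` of the completion
map is geometrically regular over the residue field `κ(Q)`. -/
def IsGRing (A : Type) [CommRing A] : Prop :=
  ∀ (P : Ideal A) (hP : P.IsPrime) (Q : Ideal (Localization.AtPrime P)) (hQ : Q.IsPrime),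
    GeomRegularOver (ResidueField (Localization.AtPrime Q))
      (TensorProduct (Localization.AtPrime P) (ResidueField (Localization.AtPrime Q))
        (AdicCompletion (maximalIdeal (Localization.AtPrime P)) (Localization.AtPrime P)))

/-- `A` is J-2: the regular locus of every finitely generated `A`-algebra is open. -/
def IsJ2 (A : Type) [CommRing A] : Prop :=
  ∀ (B : Type) [CommRing B] [Algebra A B], Algebra.FiniteType A B →
    IsOpen {q : PrimeSpectrum B | IsRegularLocalRingD (Localization.AtPrime q.asIdeal)}

/-- An excellent ring: Noetherian, universally catenary G-ring satisfying J-2. -/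
def IsExcellentD (A : Type) [CommRing A] : Prop :=
  IsNoetherianRing A ∧ UnivCatenary A ∧ IsGRing A ∧ IsJ2 A


/-- minimal primes of a Noetherian commutative ring are associated primes. -/
theorem aux_minimal_isAssociated {S : Type*} [CommRing S] [IsNoetherianRing S]
    {q : Ideal S} (hq : q ∈ minimalPrimes S) : IsAssociatedPrime q S := by
  classical
  have hqp : q.IsPrime := hq.1.1
  haveI := hqp
  set Lq := Localization.AtPrime q with hLq
  haveI : IsNoetherianRing Lq := IsLocalization.isNoetherianRing q.primeCompl Lq ‹IsNoetherianRing S›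
  obtain ⟨P, hP⟩ := associatedPrimes.nonempty Lq Lq
  obtain ⟨hPp, y, hy⟩ := isAssociatedPrime_iff.mp hP
  have hcom : Ideal.comap (algebraMap S Lq) P = q := by
    have h1 : Ideal.comap (algebraMap S Lq) P ≤ q := by
      have hle : P ≤ maximalIdeal Lq := le_maximalIdeal hPp.ne_top
      calc Ideal.comap (algebraMap S Lq) P ≤ Ideal.comap (algebraMap S Lq) (maximalIdeal Lq) :=
            Ideal.comap_mono hle
        _ = q := Localization.AtPrime.comap_maximalIdeal
    exact le_antisymm h1 (hq.2 ⟨Ideal.IsPrime.comap _, bot_le⟩ h1)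
  obtain ⟨x, s, rfl⟩ : ∃ (x : S) (s : q.primeCompl), IsLocalization.mk' Lq x s = y := by
    obtain ⟨⟨x, s⟩, h⟩ := IsLocalization.mk'_surjective q.primeCompl y; exact ⟨x, s, h⟩
  have hspec : IsLocalization.mk' Lq x s * algebraMap S Lq (s : S) = algebraMap S Lq x :=
    IsLocalization.mk'_spec Lq x s
  have hu : IsUnit (algebraMap S Lq (s : S)) := IsLocalization.map_units Lq s
  have hxann : P = Submodule.colon ⊥ {algebraMap S Lq x} := by
    ext b
    rw [hy, Submodule.mem_colon_singleton, Submodule.mem_colon_singleton, Submodule.mem_bot,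
      Submodule.mem_bot, smul_eq_mul, smul_eq_mul, ← hspec, ← mul_assoc, hu.mul_left_eq_zero]
  obtain ⟨T, hT⟩ := IsNoetherian.noetherian (q : Submodule S S)
  have key : ∀ a ∈ T, ∃ s' : q.primeCompl, (s' : S) * (a * x) = 0 := by
    intro a ha
    have haq : a ∈ q := hT ▸ Submodule.subset_span ha
    have hamem : algebraMap S Lq a ∈ P := by
      rw [← hcom] at haq; exact haq
    have h0 : algebraMap S Lq (a * x) = 0 := by
      rw [map_mul]
      have := Submodule.mem_colon_singleton.mp (hxann ▸ hamem)
      rwa [Submodule.mem_bot, smul_eq_mul] at this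
    exact (IsLocalization.map_eq_zero_iff q.primeCompl Lq _).mp h0
  choose F hF using key
  set s0 : S := ∏ a ∈ T.attach, (F a a.2 : S) with hs0def
  have hs0 : s0 ∈ q.primeCompl := Submonoid.prod_mem _ (fun a _ => (F a a.2).2)
  refine isAssociatedPrime_iff.mpr ⟨hqp, s0 * x, le_antisymm ?_ ?_⟩
  · -- q ≤ ann
    rw [← hT]
    rw [Submodule.span_le]
    intro a ha
    rw [SetLike.mem_coe, Submodule.mem_colon_singleton, Submodule.mem_bot, smul_eq_mul]
    have hdecomp : s0 = (F a ha : S) * ∏ b ∈ T.attach.erase ⟨a, ha⟩, (F b b.2 : S) :=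
      (Finset.mul_prod_erase T.attach _ (Finset.mem_attach T ⟨a, ha⟩)).symm
    calc a * (s0 * x)
        = (∏ b ∈ T.attach.erase ⟨a, ha⟩, (F b b.2 : S)) * ((F a ha : S) * (a * x)) := by
          rw [hdecomp]; ring
      _ = 0 := by rw [hF a ha, mul_zero]
  · intro b hb
    rw [Submodule.mem_colon_singleton, Submodule.mem_bot, smul_eq_mul] at hb
    have h0 : algebraMap S Lq b * algebraMap S Lq x = 0 := by
      have : algebraMap S Lq (b * (s0 * x)) = 0 := by rw [hb, map_zero]
      rw [map_mul, map_mul] at this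
      have hu0 : IsUnit (algebraMap S Lq s0) := IsLocalization.map_units Lq ⟨s0, hs0⟩
      have : algebraMap S Lq b * algebraMap S Lq x * algebraMap S Lq s0 = 0 := by
        rw [← this]; ring
      rwa [hu0.mul_left_eq_zero] at this
    have : algebraMap S Lq b ∈ P := by
      rw [hxann, Submodule.mem_colon_singleton, Submodule.mem_bot, smul_eq_mul]
      exact h0
    rw [← hcom]
    exact this

theorem aux_dim_le {S : Type*} [CommRing S] {d : ℕ}
    (h : ∀ q ∈ minimalPrimes S, ringKrullDim (S ⧸ q) ≤ (d : WithBot ℕ∞)) :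
    ringKrullDim S ≤ (d : WithBot ℕ∞) := by
  rw [ringKrullDim, Order.krullDim]
  refine iSup_le fun l => ?_
  haveI : (l.head).asIdeal.IsPrime := (l.head).isPrime
  obtain ⟨q, hq, hqle⟩ := Ideal.exists_minimalPrimes_le (I := (⊥ : Ideal S))
    (J := l.head.asIdeal) bot_le
  haveI hqp : q.IsPrime := hq.1.1
  have hker : ∀ i : Fin (l.length + 1), q ≤ (l i).asIdeal := by
    intro i
    refine hqle.trans ?_
    exact l.monotone (Fin.zero_le i)
  have hkerq : ∀ i : Fin (l.length + 1),
      RingHom.ker (Ideal.Quotient.mk q) ≤ (l i).asIdeal := by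
    intro i; rw [Ideal.mk_ker]; exact hker i
  let f : Fin (l.length + 1) → PrimeSpectrum (S ⧸ q) := fun i =>
    ⟨Ideal.map (Ideal.Quotient.mk q) (l i).asIdeal,
     Ideal.map_isPrime_of_surjective Ideal.Quotient.mk_surjective (hkerq i)⟩
  have hcomap : ∀ i : Fin (l.length + 1),
      Ideal.comap (Ideal.Quotient.mk q) ((f i).asIdeal) = (l i).asIdeal := by
    intro i
    rw [Ideal.comap_map_of_surjective _ Ideal.Quotient.mk_surjective, ← RingHom.ker_eq_comap_bot,
      Ideal.mk_ker, sup_eq_left.mpr (hker i)]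
  have hstrict : ∀ i : Fin l.length, f i.castSucc < f i.succ := by
    intro i
    have hlt : (l i.castSucc).asIdeal < (l i.succ).asIdeal := l.step i
    have hle : (f i.castSucc).asIdeal ≤ (f i.succ).asIdeal := Ideal.map_mono hlt.le
    have hne : (f i.castSucc).asIdeal ≠ (f i.succ).asIdeal := by
      intro heq
      have := congrArg (Ideal.comap (Ideal.Quotient.mk q)) heq
      rw [hcomap i.castSucc, hcomap i.succ] at this
      exact hlt.ne this
    exact lt_of_le_of_ne (show f i.castSucc ≤ f i.succ from hle) (fun heq => hne (congrArg PrimeSpectrum.asIdeal heq))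
  let l' : LTSeries (PrimeSpectrum (S ⧸ q)) := ⟨l.length, f, hstrict⟩
  have h1 : (l.length : WithBot ℕ∞) ≤ ringKrullDim (S ⧸ q) := Order.LTSeries.length_le_krullDim l'
  exact h1.trans (h q hq)

/-- Every coefficient of an element of `I·R(I)` (degree `k`) lies in `I^(k+1)`. -/
theorem aux_coeff_mem_of_mem_map {A : Type} [CommRing A] (I : Ideal A) {f : reesAlgebra I}
    (hf : f ∈ Ideal.map (algebraMap A (reesAlgebra I)) I) (k : ℕ) :
    ((f : A[X]).coeff k) ∈ I ^ (k + 1) := by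
  let K : Ideal (reesAlgebra I) :=
    { carrier := { g : reesAlgebra I | ∀ j, ((g : A[X]).coeff j) ∈ I ^ (j + 1) }
      add_mem' := by
        intro g h hg hh j
        have : ((g + h : reesAlgebra I) : A[X]).coeff j
            = (g : A[X]).coeff j + (h : A[X]).coeff j := by
          push_cast [Polynomial.coeff_add]; ring
        rw [this]
        exact Ideal.add_mem _ (hg j) (hh j)
      zero_mem' := by intro j; simp
      smul_mem' := by
        intro c g hg j
        have hval : ((c • g : reesAlgebra I) : A[X]) = (c : A[X]) * (g : A[X]) := by
          rw [smul_eq_mul]; push_cast; ring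
        rw [hval, Polynomial.coeff_mul]
        apply Ideal.sum_mem
        rintro ⟨u, v⟩ huv
        have huv' : u + v = j := Finset.HasAntidiagonal.mem_antidiagonal.mp huv
        have h1 : (c : A[X]).coeff u ∈ I ^ u := c.2 u
        have h2 : (g : A[X]).coeff v ∈ I ^ (v + 1) := hg v
        have hle : I ^ u * I ^ (v + 1) ≤ I ^ (j + 1) := by
          rw [← pow_add]
          exact le_of_eq (by rw [show u + (v + 1) = j + 1 by omega])
        exact hle (Ideal.mul_mem_mul h1 h2) }
  have hmap : Ideal.map (algebraMap A (reesAlgebra I)) I ≤ K := by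
    rw [Ideal.map_le_iff_le_comap]
    intro a ha
    rw [Ideal.mem_comap]
    intro j
    have hval : ((algebraMap A (reesAlgebra I) a : reesAlgebra I) : A[X]) = Polynomial.C a := rfl
    rw [show (((algebraMap A (reesAlgebra I)) a : reesAlgebra I) : A[X]).coeff j = (Polynomial.C a).coeff j from rfl, Polynomial.coeff_C]
    split_ifs with hj
    · subst hj; simpa [pow_one] using ha
    · simp
  exact hmap hf k

/-- If `z ∈ I^(t+1)` then the monomial `z·Xᵗ` lies in `I·R(I)`. -/
theorem aux_monomial_mem_map {A : Type} [CommRing A] (I : Ideal A) (t : ℕ) (z : A)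
    (hz : z ∈ I ^ (t + 1)) :
    ∃ (h : (monomial t z : A[X]) ∈ reesAlgebra I),
      (⟨monomial t z, h⟩ : reesAlgebra I) ∈ Ideal.map (algebraMap A (reesAlgebra I)) I := by
  rw [pow_succ] at hz
  refine Submodule.mul_induction_on hz ?_ ?_
  · intro p hp b hb
    have hpm : (monomial t p : A[X]) ∈ reesAlgebra I := reesAlgebra.monomial_mem.mpr hp
    have hmem : (monomial t (p * b) : A[X]) ∈ reesAlgebra I :=
      reesAlgebra.monomial_mem.mpr (Ideal.mul_mem_right b _ hp)
    refine ⟨hmem, ?_⟩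
    have heq : (⟨monomial t (p * b), hmem⟩ : reesAlgebra I)
        = algebraMap A (reesAlgebra I) b * ⟨monomial t p, hpm⟩ := by
      apply Subtype.ext
      push_cast
      show (monomial t (p * b) : A[X]) = Polynomial.C b * monomial t p
      rw [Polynomial.C_mul_monomial, mul_comm]
    rw [heq]
    exact Ideal.mul_mem_right _ _ (Ideal.mem_map_of_mem _ hb)
  · rintro u v ⟨hu, hum⟩ ⟨hv, hvm⟩
    have hmem : (monomial t (u + v) : A[X]) ∈ reesAlgebra I := by
      rw [map_add]; exact add_mem hu hv
    refine ⟨hmem, ?_⟩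
    have heq : (⟨monomial t (u + v), hmem⟩ : reesAlgebra I)
        = (⟨monomial t u, hu⟩ : reesAlgebra I) + ⟨monomial t v, hv⟩ := by
      apply Subtype.ext; push_cast; rw [map_add]
    rw [heq]
    exact Ideal.add_mem _ hum hvm

theorem aux_le_sat {A : Type} [CommRing A] [IsLocalRing A] (J : Ideal A) : J ≤ J.sat := by
  refine le_trans ?_ (le_iSup _ 0)
  intro r hr
  rw [Submodule.mem_colon]
  intro p _
  rw [smul_eq_mul]
  exact J.mul_mem_right p hr

theorem aux_reduce {A : Type} [CommRing A] [IsLocalRing A] (J : Ideal A) :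
    ∀ (i : ℕ) (x : A), x ∉ J → (∀ a ∈ (maximalIdeal A) ^ i, x * a ∈ J) →
      ∃ y, y ∉ J ∧ ∀ a ∈ maximalIdeal A, y * a ∈ J := by
  intro i
  induction i with
  | zero =>
    intro x hx h
    exact absurd (by simpa using h 1 (by simp)) hx
  | succ i ih =>
    intro x hx h
    by_cases hc : ∀ a ∈ (maximalIdeal A) ^ i, x * a ∈ J
    · exact ih x hx hc
    · push_neg at hc
      obtain ⟨c, hc1, hc2⟩ := hc
      refine ⟨x * c, hc2, ?_⟩
      intro a ha
      have : c * a ∈ (maximalIdeal A) ^ (i + 1) := by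
        rw [pow_succ]
        exact Ideal.mul_mem_mul hc1 ha
      rw [mul_assoc]
      exact h _ this

theorem aux_exists_le_isAssociatedPrime (G : Type*) [CommRing G] [IsNoetherianRing G] (ξ : G)
    (h : ξ ≠ 0) : ∃ P : Ideal G, P ∈ associatedPrimes G G ∧ (⊥ : Submodule G G).colon {ξ} ≤ P :=
  exists_le_isAssociatedPrime_of_isNoetherianRing G ξ h

/-- For an excellent normal local domain with `G_I(A)` unmixed and equidimensional,
either `(Iⁿ)^sat = Iⁿ` for all `n ≥ 1`, or `ℓ(I) = d`. -/
theorem stmt14 (A : Type) [CommRing A] [IsLocalRing A] [IsDomain A] [IsIntegrallyClosed A]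
    (hexc : IsExcellentD A)
    (d : ℕ) (hd : 1 ≤ d) (hdim : ringKrullDim A = (d : WithBot ℕ∞))
    (I : Ideal A)
    (hunmix : UnmixedEquidim (assocGraded I) d) :
    (∀ n : ℕ, 1 ≤ n → (I ^ n).sat = I ^ n) ∨ analyticSpread A I = (d : WithBot ℕ∞) := by
  classical
  haveI hNoeth : IsNoetherianRing A := hexc.1
  by_cases hI : I = ⊤
  · left
    intro n hn
    subst hI
    rw [Ideal.top_pow]
    exact le_antisymm le_top (aux_le_sat ⊤)
  by_cases hsat : ∀ n : ℕ, 1 ≤ n → (I ^ n).sat = I ^ n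
  · exact Or.inl hsat
  right
  push_neg at hsat
  obtain ⟨n, hn1, hne⟩ := hsat
  have hle : I ^ n ≤ (I ^ n).sat := aux_le_sat _
  obtain ⟨x0, hx0s, hx0n⟩ := SetLike.exists_of_lt (lt_of_le_of_ne hle (Ne.symm hne))
  have hxsome : ∃ i : ℕ, ∀ a ∈ (maximalIdeal A) ^ i, x0 * a ∈ I ^ n := by
    have hdir : Directed (· ≤ ·) (fun i : ℕ => Submodule.colon ((I ^ n : Ideal A) : Submodule A A)
        (((maximalIdeal A) ^ i : Ideal A) : Submodule A A)) := by
      apply Monotone.directed_le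
      intro i j hij r hr
      rw [Submodule.mem_colon] at hr ⊢
      intro p hp
      exact hr p (Ideal.pow_le_pow_right hij hp)
    rw [Ideal.sat, Submodule.mem_iSup_of_directed _ hdir] at hx0s
    obtain ⟨i, hi⟩ := hx0s
    refine ⟨i, fun a ha => ?_⟩
    have := Submodule.mem_colon.mp hi a ha
    rwa [smul_eq_mul] at this
  obtain ⟨i, hxi⟩ := hxsome
  obtain ⟨x, hxn, hxm⟩ := aux_reduce (I ^ n) i x0 hx0n hxi
  -- the order of vanishing t
  have hfind : ∃ k : ℕ, x ∉ I ^ (k + 1) := ⟨n - 1, by rwa [Nat.sub_add_cancel hn1]⟩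
  set t := Nat.find hfind with ht
  have hxt1 : x ∉ I ^ (t + 1) := Nat.find_spec hfind
  have htn : t + 1 ≤ n := by
    have h1 : t ≤ n - 1 := Nat.find_le (by rwa [Nat.sub_add_cancel hn1])
    omega
  have hxt : x ∈ I ^ t := by
    rcases Nat.eq_zero_or_pos t with h0 | hpos
    · rw [h0, pow_zero, Ideal.one_eq_top]; trivial
    · have hmin := Nat.find_min hfind (show t - 1 < t by omega)
      rw [Nat.sub_add_cancel hpos] at hmin
      exact not_not.mp hmin
  set J0 : Ideal (reesAlgebra I) := Ideal.map (algebraMap A (reesAlgebra I)) I with hJ0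
  have hfmem : (monomial t x : A[X]) ∈ reesAlgebra I := reesAlgebra.monomial_mem.mpr hxt
  set ξ : assocGraded I := Ideal.Quotient.mk J0 ⟨monomial t x, hfmem⟩ with hξ
  have hxine : ξ ≠ 0 := by
    intro h
    rw [hξ, Ideal.Quotient.eq_zero_iff_mem] at h
    have := aux_coeff_mem_of_mem_map I h t
    simp only [Polynomial.coeff_monomial, if_pos rfl] at this
    exact hxt1 this
  have hann : ∀ a ∈ maximalIdeal A,
      (Ideal.Quotient.mk J0 (algebraMap A (reesAlgebra I) a)) * ξ = 0 := by
    intro a ha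
    rw [hξ, ← map_mul, Ideal.Quotient.eq_zero_iff_mem]
    have hax : a * x ∈ I ^ (t + 1) := by
      apply Ideal.pow_le_pow_right htn
      rw [mul_comm]
      exact hxm a ha
    obtain ⟨hh, hmem⟩ := aux_monomial_mem_map I t (a * x) hax
    have heq : algebraMap A (reesAlgebra I) a * (⟨monomial t x, hfmem⟩ : reesAlgebra I)
        = ⟨monomial t (a * x), hh⟩ := by
      apply Subtype.ext
      push_cast
      show Polynomial.C a * monomial t x = monomial t (a * x)
      rw [Polynomial.C_mul_monomial]
    rw [heq]
    exact hmem
  obtain ⟨P, hP, hannle⟩ :=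
    aux_exists_le_isAssociatedPrime (assocGraded I) ξ hxine
  have hdP := hunmix P hP
  set φ : reesAlgebra I →+* (assocGraded I ⧸ P) :=
    (Ideal.Quotient.mk P).comp (Ideal.Quotient.mk J0) with hφ
  have hφker : Ideal.map (algebraMap A (reesAlgebra I)) (maximalIdeal A) ≤ RingHom.ker φ := by
    rw [Ideal.map_le_iff_le_comap]
    intro a ha
    rw [Ideal.mem_comap, RingHom.mem_ker, hφ, RingHom.comp_apply,
      Ideal.Quotient.eq_zero_iff_mem]
    apply hannle
    rw [Submodule.mem_colon_singleton, Submodule.mem_bot, smul_eq_mul]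
    exact hann a ha
  set ψ : fiberCone A I →+* (assocGraded I ⧸ P) :=
    Ideal.Quotient.lift _ φ (fun r hr => hφker hr) with hψ
  have hψs : Function.Surjective ψ := by
    intro y
    obtain ⟨z, rfl⟩ := Ideal.Quotient.mk_surjective y
    obtain ⟨w, rfl⟩ := Ideal.Quotient.mk_surjective z
    exact ⟨Ideal.Quotient.mk _ w, rfl⟩
  have h1 : (d : WithBot ℕ∞) ≤ analyticSpread A I := by
    rw [← hdP]
    exact ringKrullDim_le_of_surjective ψ hψs
  -- upper bound
  have hmaple : J0 ≤ Ideal.map (algebraMap A (reesAlgebra I)) (maximalIdeal A) :=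
    Ideal.map_mono (le_maximalIdeal hI)
  set σ : assocGraded I →+* fiberCone A I :=
    Ideal.Quotient.lift J0 (Ideal.Quotient.mk _)
      (fun r hr => Ideal.Quotient.eq_zero_iff_mem.mpr (hmaple hr)) with hσ
  have hσs : Function.Surjective σ := by
    intro y
    obtain ⟨z, rfl⟩ := Ideal.Quotient.mk_surjective y
    exact ⟨Ideal.Quotient.mk _ z, rfl⟩
  have h2 : analyticSpread A I ≤ ringKrullDim (assocGraded I) :=
    ringKrullDim_le_of_surjective σ hσs
  have h3 : ringKrullDim (assocGraded I) ≤ (d : WithBot ℕ∞) :=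
    aux_dim_le (fun q hq => le_of_eq (hunmix q (aux_minimal_isAssociated hq)))
  exact le_antisymm (h2.trans h3) h1


end
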